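/- arXiv:math/0406109 — 2 statements merged into one kernel-verified Lean document; each statement's English description precedes it below -/
import Mathlib

section
/- Let g_n (n ∈ ℕ) and g be positive concave functions on the interval [1,∞) such that for every x ∈ [1,∞) the sequence (g_n(x)) is nonincreasing in n and converges to g(x). Then the functions x ↦ g_n(x)/x converge to x ↦ g(x)/x uniformly on [1,∞). -/
open Filter Topology

private lemma concave_secant_anti {s : Set ℝ} {f : ℝ → ℝ} (hf : ConcaveOn ℝ s f) {a x y : ℝ}
    (ha : a ∈ s) (hx : x ∈ s) (hy : y ∈ s) (hxa : x ≠ a) (hya : y ≠ a) (hxy : x ≤ y) :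
    (f y - f a) / (y - a) ≤ (f x - f a) / (x - a) := by
  have key := hf.neg.secant_mono ha hx hy hxa hya hxy
  simp only [Pi.neg_apply] at key
  rw [show -f x - -f a = -(f x - f a) by ring, show -f y - -f a = -(f y - f a) by ring,
    neg_div, neg_div, neg_le_neg_iff] at key
  exact key

private lemma concave_pos_mono {f : ℝ → ℝ} (hf : ConcaveOn ℝ (Set.Ici 1) f)
    (hp : ∀ x ∈ Set.Ici (1:ℝ), 0 < f x) : MonotoneOn f (Set.Ici 1) := by
  rintro x hx y hy hxy
  rcases eq_or_lt_of_le hxy with rfl | hlt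
  · exact le_rfl
  by_contra hcon
  push_neg at hcon
  obtain ⟨s, hs⟩ : ∃ s:ℝ, s = (f y - f x) / (y - x) := ⟨_, rfl⟩
  have hspos : s < 0 := hs ▸ div_neg_of_neg_of_pos (by linarith) (by linarith)
  obtain ⟨z, hz⟩ : ∃ z:ℝ, z = y + f y / (-s) + 1 := ⟨_, rfl⟩
  have hyz : y < z := by
    have : 0 < f y / (-s) := div_pos (hp y hy) (by linarith)
    linarith
  have hzs : z ∈ Set.Ici (1:ℝ) := le_trans hy (le_of_lt hyz)
  have key := hf.slope_anti_adjacent hx hzs hlt hyz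
  rw [← hs] at key
  have hzy : (0:ℝ) < z - y := by linarith
  have h2 : f z - f y ≤ s * (z - y) := by
    have := mul_le_mul_of_nonneg_right key hzy.le
    rw [div_mul_cancel₀ _ (ne_of_gt hzy)] at this
    exact le_trans this (le_of_eq rfl)
  have hzy2 : z - y = f y / (-s) + 1 := by rw [hz]; ring
  have h3 : s * (z - y) = -(f y) + s := by
    rw [hzy2]
    have hsne : s ≠ 0 := ne_of_lt hspos
    field_simp [hsne]
  have := hp z hzs
  linarith

set_option maxHeartbeats 1000000

/-- **Dini-type lemma for concave functions.** Let `gₙ` and `g` be positive concave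
functions on `[1,∞)` such that for every `x` the sequence `gₙ(x)` is nonincreasing
in `n` and converges to `g(x)`. Then `x ↦ gₙ(x)/x` converges to `x ↦ g(x)/x`
uniformly on `[1,∞)`. -/
theorem concave_div_tendstoUniformly (g : ℕ → ℝ → ℝ) (gl : ℝ → ℝ)
    (hconc : ∀ n, ConcaveOn ℝ (Set.Ici 1) (g n))
    (hpos : ∀ n, ∀ x ∈ Set.Ici (1 : ℝ), 0 < g n x)
    (hlconc : ConcaveOn ℝ (Set.Ici 1) gl)
    (hlpos : ∀ x ∈ Set.Ici (1 : ℝ), 0 < gl x)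
    (hanti : ∀ x ∈ Set.Ici (1 : ℝ), ∀ m n : ℕ, m ≤ n → g n x ≤ g m x)
    (hlim : ∀ x ∈ Set.Ici (1 : ℝ), Tendsto (fun n => g n x) atTop (𝓝 (gl x))) :
    TendstoUniformlyOn (fun n x => g n x / x) (fun x => gl x / x) atTop
      (Set.Ici 1) := by
  have hmono : ∀ n, MonotoneOn (g n) (Set.Ici 1) := fun n => concave_pos_mono (hconc n) (hpos n)
  have hlmono : MonotoneOn gl (Set.Ici 1) := concave_pos_mono hlconc hlpos
  have hle : ∀ x ∈ Set.Ici (1:ℝ), ∀ n, gl x ≤ g n x := by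
    intro x hx n
    refine le_of_tendsto (hlim x hx) ?_
    filter_upwards [eventually_ge_atTop n] with m hm
    exact hanti x hx n m hm
  have hev : ∀ x ∈ Set.Ici (1:ℝ), ∀ c : ℝ, 0 < c → ∀ᶠ n in atTop, g n x - gl x ≤ c := by
    intro x hx c hc
    filter_upwards [(hlim x hx).eventually_lt_const (by linarith : gl x < gl x + c)] with n hn
    linarith
  rw [Metric.tendstoUniformlyOn_iff]
  intro ε hε
  obtain ⟨ε', hε'def⟩ : ∃ e : ℝ, e = ε / 8 := ⟨_, rfl⟩
  have hε' : 0 < ε' := by rw [hε'def]; positivity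
  -- tail: infimum of slopes of gl from 1
  obtain ⟨S, hSdef⟩ : ∃ S : Set ℝ, S = (fun R => (gl R - gl 1) / (R - 1)) '' Set.Ioi 1 := ⟨_, rfl⟩
  have hSne : S.Nonempty := ⟨(gl 2 - gl 1) / (2 - 1), by rw [hSdef]; exact ⟨2, by norm_num, rfl⟩⟩
  have hSbdd : BddBelow S := by
    refine ⟨0, ?_⟩
    rw [hSdef]
    rintro _ ⟨R, hR, rfl⟩
    have hR : (1:ℝ) < R := hR
    have : gl 1 ≤ gl R := hlmono (by norm_num) (le_of_lt hR) (le_of_lt hR)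
    exact div_nonneg (by linarith) (by linarith)
  obtain ⟨L, hLdef⟩ : ∃ L : ℝ, L = sInf S := ⟨_, rfl⟩
  have hLle : ∀ x : ℝ, 1 < x → L ≤ (gl x - gl 1) / (x - 1) := by
    intro x hx
    rw [hLdef]
    exact csInf_le hSbdd (by rw [hSdef]; exact ⟨x, hx, rfl⟩)
  obtain ⟨a, haS, hRs⟩ := exists_lt_of_csInf_lt hSne (lt_add_of_pos_right (sInf S) hε')
  rw [hSdef] at haS
  obtain ⟨R, hR1, rfl⟩ := haS
  have hR1 : (1:ℝ) < R := hR1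
  rw [← hLdef] at hRs
  -- hRs : (gl R - gl 1)/(R-1) < L + ε'
  obtain ⟨δ, hδdef⟩ : ∃ d : ℝ, d = min ε' (ε' * (R - 1)) := ⟨_, rfl⟩
  have hδpos : 0 < δ := by rw [hδdef]; exact lt_min hε' (mul_pos hε' (by linarith))
  have hδε' : δ ≤ ε' := by rw [hδdef]; exact min_le_left _ _
  have hδR : δ / (R - 1) ≤ ε' := by
    rw [div_le_iff₀ (by linarith : (0:ℝ) < R - 1)]
    rw [hδdef]
    exact min_le_right _ _
  -- near 1 : infimum of gl on (1,2]
  obtain ⟨A, hAdef⟩ : ∃ A : ℝ, A = sInf (gl '' Set.Ioc 1 2) := ⟨_, rfl⟩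
  have hAne : (gl '' Set.Ioc 1 2).Nonempty := ⟨gl 2, 2, by norm_num, rfl⟩
  have hAbdd : BddBelow (gl '' Set.Ioc 1 2) := by
    refine ⟨0, ?_⟩
    rintro _ ⟨x, hx, rfl⟩
    exact (hlpos x (le_of_lt hx.1)).le
  have hAle : ∀ x ∈ Set.Ioc (1:ℝ) 2, A ≤ gl x := by
    intro x hx
    rw [hAdef]
    exact csInf_le hAbdd ⟨x, hx, rfl⟩
  obtain ⟨b, hbA, hus⟩ := exists_lt_of_csInf_lt hAne (lt_add_of_pos_right (sInf (gl '' Set.Ioc 1 2)) hε')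
  obtain ⟨u, hu12, rfl⟩ := hbA
  rw [← hAdef] at hus
  have hu1 : (1:ℝ) < u := hu12.1
  have hu2 : u ≤ 2 := hu12.2
  -- middle grid
  obtain ⟨Rs, hRsdef⟩ : ∃ r : ℝ, r = max R u := ⟨_, rfl⟩
  have hRsR : R ≤ Rs := hRsdef ▸ le_max_left _ _
  have hRsu : u ≤ Rs := hRsdef ▸ le_max_right _ _
  obtain ⟨K, hKdef⟩ : ∃ k : ℝ, k = gl (Rs + 1) / (u - 1) := ⟨_, rfl⟩
  have hRs1 : (1:ℝ) ≤ Rs + 1 := by linarith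
  have hKpos : 0 < K := by
    rw [hKdef]
    exact div_pos (hlpos _ hRs1) (by linarith)
  obtain ⟨step, hstepdef⟩ : ∃ s : ℝ, s = min 1 (ε' / (K + 1)) := ⟨_, rfl⟩
  have hstep : 0 < step := by
    rw [hstepdef]
    exact lt_min one_pos (div_pos hε' (by linarith))
  have hstep1 : step ≤ 1 := by rw [hstepdef]; exact min_le_left _ _
  have hstepK : step * K ≤ ε' := by
    have h1 : step ≤ ε' / (K + 1) := by rw [hstepdef]; exact min_le_right _ _
    have h2 : step * (K + 1) ≤ ε' := (le_div_iff₀ (by linarith : (0:ℝ) < K + 1)).mp h1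
    nlinarith
  obtain ⟨M, hMdef⟩ : ∃ m : ℕ, m = Nat.ceil ((Rs - u) / step) + 1 := ⟨_, rfl⟩
  -- eventual conditions
  have hgridmem : ∀ j : ℕ, u + (j:ℝ) * step ∈ Set.Ici (1:ℝ) := by
    intro j
    have : (0:ℝ) ≤ (j:ℝ) * step := mul_nonneg (Nat.cast_nonneg j) hstep.le
    simp only [Set.mem_Ici]; linarith
  filter_upwards [hev 1 (by norm_num) δ hδpos, hev R (le_of_lt hR1) δ hδpos,
    hev u (le_of_lt hu1) ε' hε',
    (eventually_all_finset (Finset.range (M + 1))).mpr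
      (fun j _ => hev (u + (j:ℝ) * step) (hgridmem j) ε' hε')] with n h1n hRn hun hgridn
  intro x hx
  have hx1 : (1:ℝ) ≤ x := hx
  have hx0 : (0:ℝ) < x := by linarith
  have hD0 : 0 ≤ g n x - gl x := sub_nonneg.2 (hle x hx n)
  have habs : dist (gl x / x) (g n x / x) = (g n x - gl x) / x := by
    rw [Real.dist_eq, show gl x / x - g n x / x = -((g n x - gl x) / x) by ring, abs_neg,
      abs_of_nonneg (div_nonneg hD0 hx0.le)]
  rw [habs]
  have hfin : (3:ℝ) * ε' < ε := by rw [hε'def]; linarith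
  refine lt_of_le_of_lt ?_ hfin
  have hdivle : (g n x - gl x) / x ≤ g n x - gl x := div_le_self hD0 hx1
  rcases eq_or_lt_of_le hx1 with heq | hx1'
  · -- x = 1
    rw [← heq, div_one]
    linarith
  by_cases hxu : x ≤ u
  · -- near 1
    have h1 : g n x ≤ g n u := hmono n hx (le_of_lt hu1) hxu
    have h2 : A ≤ gl x := hAle x ⟨hx1', le_trans hxu hu2⟩
    linarith
  push_neg at hxu
  by_cases hxR : R ≤ x
  · -- tail
    have hSn : (g n x - g n 1) / (x - 1) ≤ (g n R - g n 1) / (R - 1) := by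
      rcases eq_or_lt_of_le hxR with rfl | hRx
      · exact le_rfl
      · exact concave_secant_anti (hconc n) (by norm_num : (1:ℝ) ∈ Set.Ici 1)
          (le_of_lt hR1) hx (by intro h; exact absurd h (by linarith))
          (by intro h; exact absurd h (by linarith)) hxR
    have hgl : L ≤ (gl x - gl 1) / (x - 1) := hLle x hx1'
    have h1le : gl 1 ≤ g n 1 := hle 1 (by norm_num) n
    have hSn2 : (g n R - g n 1) / (R - 1) ≤ L + 2 * ε' := by
      have hq1 : (g n R - g n 1) / (R - 1) ≤ (gl R + δ - gl 1) / (R - 1) := by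
        gcongr (?_ : ℝ) / _
        · linarith
      have hq2 : (gl R + δ - gl 1) / (R - 1) = (gl R - gl 1) / (R - 1) + δ / (R - 1) := by
        rw [show gl R + δ - gl 1 = (gl R - gl 1) + δ by ring, add_div]
      linarith
    have e1 : g n x - g n 1 ≤ ((g n R - g n 1) / (R - 1)) * (x - 1) :=
      (div_le_iff₀ (by linarith : (0:ℝ) < x - 1)).mp hSn
    have e2 : L * (x - 1) ≤ gl x - gl 1 := by
      have := (le_div_iff₀ (by linarith : (0:ℝ) < x - 1)).mp hgl
      linarith
    have e3 : ((g n R - g n 1) / (R - 1)) * (x - 1) ≤ (L + 2 * ε') * (x - 1) :=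
      mul_le_mul_of_nonneg_right hSn2 (by linarith)
    have e3' : (L + 2 * ε') * (x - 1) = L * (x - 1) + 2 * ε' * (x - 1) := by ring
    have e4 : g n x - gl x ≤ δ + 2 * ε' * (x - 1) := by linarith
    rw [div_le_iff₀ hx0]
    have e5 : δ ≤ δ * x := le_mul_of_one_le_right hδpos.le hx1
    have e6 : 2 * ε' * (x - 1) = 2 * (ε' * x) - 2 * ε' := by ring
    have e7 : δ * x ≤ ε' * x := mul_le_mul_of_nonneg_right hδε' hx0.le
    have e8 : 3 * ε' * x = 3 * (ε' * x) := by ring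
    linarith
  push_neg at hxR
  -- middle : u < x < R so u ≤ x ≤ Rs
  have hxRs : x ≤ Rs := le_trans hxR.le hRsR
  obtain ⟨i, hidef⟩ : ∃ i : ℕ, i = Nat.floor ((x - u) / step) := ⟨_, rfl⟩
  have hxus : (0:ℝ) ≤ (x - u) / step := div_nonneg (by linarith) hstep.le
  have hfl : (i:ℝ) ≤ (x - u) / step := hidef ▸ Nat.floor_le hxus
  have hfl2 : (x - u) / step < (i:ℝ) + 1 := by rw [hidef]; exact Nat.lt_floor_add_one _
  have ht_le : u + (i:ℝ) * step ≤ x := by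
    have := mul_le_mul_of_nonneg_right hfl hstep.le
    rw [div_mul_cancel₀ _ (ne_of_gt hstep)] at this
    linarith
  have ht'_gt : x < u + ((i:ℝ) + 1) * step := by
    have := mul_lt_mul_of_pos_right hfl2 hstep
    rw [div_mul_cancel₀ _ (ne_of_gt hstep)] at this
    linarith
  have hiM : i + 1 ≤ M := by
    have hc1 : (i:ℝ) ≤ (Rs - u) / step := le_trans hfl (by gcongr)
    have hc2 : (i:ℝ) ≤ (Nat.ceil ((Rs - u) / step) : ℝ) := le_trans hc1 (Nat.le_ceil _)
    have : i ≤ Nat.ceil ((Rs - u) / step) := by exact_mod_cast hc2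
    omega
  have hgridc := hgridn (i + 1) (Finset.mem_range.mpr (by omega))
  push_cast at hgridc
  -- hgridc : g n (u + (i+1)*step) - gl (u + (i+1)*step) ≤ ε'
  have ht1 : (1:ℝ) < u + (i:ℝ) * step := by
    have : (0:ℝ) ≤ (i:ℝ) * step := mul_nonneg (Nat.cast_nonneg i) hstep.le
    linarith
  have ht'1 : (1:ℝ) ≤ u + ((i:ℝ) + 1) * step := le_of_lt (lt_of_le_of_lt hx1 ht'_gt)
  have htt' : u + (i:ℝ) * step < u + ((i:ℝ) + 1) * step := by nlinarith
  have hlip : gl (u + ((i:ℝ) + 1) * step) - gl (u + (i:ℝ) * step) ≤ ε' := by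
    have key := hlconc.slope_anti_adjacent (show (1:ℝ) ∈ Set.Ici 1 by norm_num)
      (show u + ((i:ℝ) + 1) * step ∈ Set.Ici 1 from ht'1) ht1 htt'
    have hdd : (u + ((i:ℝ) + 1) * step) - (u + (i:ℝ) * step) = step := by ring
    have key2 : gl (u + ((i:ℝ) + 1) * step) - gl (u + (i:ℝ) * step) ≤
        step * ((gl (u + (i:ℝ) * step) - gl 1) / (u + (i:ℝ) * step - 1)) := by
      have := mul_le_mul_of_nonneg_right key (le_of_lt hstep)
      rw [show ((gl (u + ((i:ℝ)+1) * step) - gl (u + (i:ℝ) * step)) /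
        ((u + ((i:ℝ)+1) * step) - (u + (i:ℝ) * step))) * step
        = gl (u + ((i:ℝ)+1) * step) - gl (u + (i:ℝ) * step) by
          rw [hdd]; field_simp] at this
      linarith [this]
    have hbound : (gl (u + (i:ℝ) * step) - gl 1) / (u + (i:ℝ) * step - 1) ≤ K := by
      rw [hKdef]
      apply div_le_div₀ (hlpos _ hRs1).le
      · have hmle : gl (u + (i:ℝ) * step) ≤ gl (Rs + 1) :=
          hlmono (le_of_lt ht1) hRs1 (by linarith)
        have : (0:ℝ) ≤ gl 1 := (hlpos 1 (by norm_num)).le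
        linarith
      · linarith
      · have : (0:ℝ) ≤ (i:ℝ) * step := mul_nonneg (Nat.cast_nonneg i) hstep.le
        linarith
    have : step * ((gl (u + (i:ℝ) * step) - gl 1) / (u + (i:ℝ) * step - 1)) ≤ step * K :=
      mul_le_mul_of_nonneg_left hbound hstep.le
    linarith
  have hm1 : g n x ≤ g n (u + ((i:ℝ) + 1) * step) :=
    hmono n hx ht'1 (le_of_lt ht'_gt)
  have hm2 : gl (u + (i:ℝ) * step) ≤ gl x := hlmono (le_of_lt ht1) hx ht_le
  linarith
end

section
/- The multiplier ideal of a psh function is integrally closed: let u be psh on a neighborhood of 0 in ℂ². Then J(u) is an ideal of the ring O₀ of holomorphic germs at 0, and whenever a germ ψ ∈ O₀ satisfies an equation of integral dependence ψ^n + a₁ψ^{n−1} + ⋯ + a_n = 0 on a neighborhood of 0, with n ≥ 1 and a_i ∈ J(u)^i (the i-th power of the ideal J(u)) for each 1 ≤ i ≤ n, then ψ ∈ J(u). -/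
open MeasureTheory Filter Metric Topology Set

noncomputable section

/-- A nonnegative extended-real-valued function on `ℂ²` is locally integrable at `0`
if its Lebesgue integral over some neighborhood of `0` is finite. -/
def LocIntegrableAtZero (f : ℂ × ℂ → ENNReal) : Prop :=
  ∃ V ∈ 𝓝 (0 : ℂ × ℂ), ∫⁻ x in V, f x < ⊤

/-- The exponential of an extended real number, valued in `[0,∞]`. -/
noncomputable def expE (x : EReal) : ENNReal :=
  if x = ⊥ then 0 else if x = ⊤ then ⊤ else ENNReal.ofReal (Real.exp x.toReal)

/-- The submean value inequality on the circle `{a + e^{iθ} b}`, expressed via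
continuous majorants (for an upper semicontinuous `u` this is equivalent to
`u a ≤ (1/2π) ∫₀^{2π} u (a + e^{iθ} b) dθ`). -/
def SubmeanAt (u : ℂ × ℂ → EReal) (a b : ℂ × ℂ) : Prop :=
  ∀ f : ℝ → ℝ, Continuous f →
    (∀ θ : ℝ, u (a + Complex.exp (θ * Complex.I) • b) ≤ ((f θ : ℝ) : EReal)) →
    u a ≤ (((1 / (2 * Real.pi)) * ∫ θ in (0:ℝ)..(2 * Real.pi), f θ : ℝ) : EReal)

/-- `u : ℂ² → [−∞,∞)` is plurisubharmonic on `Ω`. -/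
structure IsPshOn (Ω : Set (ℂ × ℂ)) (u : ℂ × ℂ → EReal) : Prop where
  usc : UpperSemicontinuousOn u Ω
  ne_top : ∀ x ∈ Ω, u x ≠ ⊤
  not_bot : ∀ x ∈ Ω, ∃ y ∈ connectedComponentIn Ω x, u y ≠ ⊥
  submean : ∀ a ∈ Ω, ∀ b : ℂ × ℂ,
    (∀ τ : ℂ, ‖τ‖ ≤ 1 → a + τ • b ∈ Ω) → SubmeanAt u a b

/-- The set of `c > 0` such that `exp (−2 c u)` is locally integrable at `0`.
The singularity exponent `c(u)` is the supremum of this set. -/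
def intExps (u : ℂ × ℂ → EReal) : Set ℝ :=
  {c | 0 < c ∧ LocIntegrableAtZero (fun x => expE (((-2 * c : ℝ) : EReal) * u x))}

/-- The Arnold multiplicity `λ(u) = 1/c(u)` (with `1/∞ = 0`). -/
noncomputable def arnoldMult (u : ℂ × ℂ → EReal) : ℝ :=
  sInf ((fun c => 1 / c) '' intExps u)

/-- `ℓ` is the Lelong number of `u` at `0`:
`ℓ = lim_{r→0⁺} (sup_{‖q‖<r} u)/log r`. -/
def HasLelong (u : ℂ × ℂ → EReal) (ℓ : ℝ) : Prop :=
  Tendsto (fun r : ℝ => (sSup (u '' ball (0 : ℂ × ℂ) r)).toReal / Real.log r)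
    (𝓝[>] 0) (𝓝 ℓ)


/-- `ψ` (a holomorphic germ at `0 ∈ ℂ²`) belongs to the multiplier ideal `J(u)`:
`ψ` is holomorphic near `0` and `|ψ|² exp(−2u)` is locally integrable at `0`. -/
def MemMultIdeal (u : ℂ × ℂ → EReal) (ψ : ℂ × ℂ → ℂ) : Prop :=
  AnalyticAt ℂ ψ 0 ∧ LocIntegrableAtZero
    (fun q => ENNReal.ofReal (‖ψ q‖ ^ 2) *
      expE (((-2 : ℝ) : EReal) * u q))

/-- `a` belongs (as a germ at `0`) to the `i`-th power `J(u)^i` of the multiplier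
ideal: near `0`, `a` is a finite sum of products of `i` elements of `J(u)`. -/
def MemMultIdealPow (u : ℂ × ℂ → EReal) (i : ℕ) (a : ℂ × ℂ → ℂ) : Prop :=
  ∃ (k : ℕ) (b : Fin k → Fin i → ℂ × ℂ → ℂ),
    (∀ j l, MemMultIdeal u (b j l)) ∧
    ∀ᶠ x in 𝓝 (0 : ℂ × ℂ), a x = ∑ j, ∏ l, b j l x

open scoped Classical

lemma expE_mono : Monotone expE := by
  intro x y h
  unfold expE
  rcases eq_or_ne x ⊥ with rfl | hx
  · simp
  rcases eq_or_ne y ⊤ with rfl | hy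
  · simp only [hx, if_false]
    split <;> simp
  have hxt : x ≠ ⊤ := fun hxt => hy (top_le_iff.1 (hxt ▸ h))
  have hyb : y ≠ ⊥ := fun hyb => hx (le_bot_iff.1 (hyb ▸ h))
  simp only [hx, hy, hxt, hyb, if_false]
  exact ENNReal.ofReal_le_ofReal (Real.exp_le_exp.2 (EReal.toReal_le_toReal h hx hy))

lemma antitone_expE_neg2 : Antitone (fun y : EReal => expE (((-2 : ℝ) : EReal) * y)) := by
  intro y z h
  apply expE_mono
  have h2 : ((2 : ℝ) : EReal) * y ≤ ((2 : ℝ) : EReal) * z :=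
    mul_le_mul_of_nonneg_left h (by norm_num)
  have hh : ((-2 : ℝ) : EReal) = -((2 : ℝ) : EReal) := by norm_num
  rw [hh, EReal.neg_mul, EReal.neg_mul, EReal.neg_le_neg_iff]
  exact h2

lemma measurable_indicator_bot (Ω : Set (ℂ × ℂ)) (u : ℂ × ℂ → EReal) (hΩ : IsOpen Ω)
    (husc : UpperSemicontinuousOn u Ω) :
    Measurable (fun x => if x ∈ Ω then u x else (⊥ : EReal)) := by
  apply measurable_of_Iio
  intro c
  have hS : IsOpen {x | x ∈ Ω ∧ u x < c} := by
    rw [isOpen_iff_mem_nhds]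
    rintro x ⟨hx, hxc⟩
    have h1 : ∀ᶠ y in 𝓝[Ω] x, u y < c := husc x hx c hxc
    rw [nhdsWithin_eq_nhds.2 (hΩ.mem_nhds hx)] at h1
    filter_upwards [h1, hΩ.mem_nhds hx] with y h1 h2
    exact ⟨h2, h1⟩
  by_cases hc : (⊥ : EReal) < c
  · have h3 : (fun x => if x ∈ Ω then u x else (⊥ : EReal)) ⁻¹' Iio c
        = {x | x ∈ Ω ∧ u x < c} ∪ Ωᶜ := by
      ext x; by_cases hx : x ∈ Ω <;> simp [hx, hc]
    rw [h3]
    exact hS.measurableSet.union hΩ.measurableSet.compl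
  · have h3 : (fun x => if x ∈ Ω then u x else (⊥ : EReal)) ⁻¹' Iio c
        = {x | x ∈ Ω ∧ u x < c} := by
      ext x; by_cases hx : x ∈ Ω <;> simp [hx, hc]
    rw [h3]
    exact hS.measurableSet

lemma exists_w' {u : ℂ × ℂ → EReal} {Ω : Set (ℂ × ℂ)} (hΩ : IsOpen Ω)
    (husc : UpperSemicontinuousOn u Ω) :
    ∃ w' : ℂ × ℂ → ENNReal, Measurable w' ∧
      ∀ x ∈ Ω, w' x = expE (((-2 : ℝ) : EReal) * u x) :=
  ⟨(fun y : EReal => expE (((-2 : ℝ) : EReal) * y)) ∘ (fun x => if x ∈ Ω then u x else ⊥),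
    (antitone_expE_neg2.measurable).comp (measurable_indicator_bot Ω u hΩ husc),
    fun x hx => by simp [Function.comp, hx]⟩

lemma sum_rpow_le_card_rpow_mul {ι : Type*} (s : Finset ι) (x : ι → ENNReal) {p : ℝ}
    (hp : 0 < p) :
    (∑ j ∈ s, x j) ^ p ≤ (s.card : ENNReal) ^ p * ∑ j ∈ s, x j ^ p := by
  rcases s.eq_empty_or_nonempty with rfl | hs
  · simp [ENNReal.zero_rpow_of_pos hp]
  · obtain ⟨j₀, hj₀, hmax⟩ := s.exists_max_image x hs
    calc (∑ j ∈ s, x j) ^ p ≤ ((s.card : ENNReal) * x j₀) ^ p := by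
          apply ENNReal.rpow_le_rpow _ hp.le
          simpa using Finset.sum_le_card_nsmul s x (x j₀) (fun j hj => hmax j hj)
      _ = (s.card : ENNReal) ^ p * x j₀ ^ p := ENNReal.mul_rpow_of_nonneg _ _ hp.le
      _ ≤ (s.card : ENNReal) ^ p * ∑ j ∈ s, x j ^ p := by
          exact mul_le_mul_right
            (Finset.single_le_sum (f := fun j => x j ^ p) (fun j _ => zero_le) hj₀) _

lemma exists_pow_le {n : ℕ} (hn : 1 ≤ n) {t : ℝ} (ht : 0 < t) {c : Fin n → ℝ}
    (h : t ^ n ≤ ∑ i, c i * t ^ (n - (i.val + 1))) :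
    ∃ i : Fin n, t ^ (i.val + 1) ≤ (n : ℝ) * c i := by
  by_contra hcon
  push_neg at hcon
  have hne : (Finset.univ : Finset (Fin n)).Nonempty := by
    simpa [Finset.univ_nonempty_iff] using Fin.pos_iff_nonempty.1 hn
  have hlt : ∑ i : Fin n, c i * t ^ (n - (i.val + 1)) < ∑ i : Fin n, t ^ n / n := by
    apply Finset.sum_lt_sum_of_nonempty hne
    intro i _
    have hpow : t ^ (i.val + 1) * t ^ (n - (i.val + 1)) = t ^ n := by
      rw [← pow_add]; congr 1; omega
    have h1 : c i < t ^ (i.val + 1) / n := by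
      rw [lt_div_iff₀ (by positivity)]
      linarith [hcon i]
    calc c i * t ^ (n - (i.val + 1)) < t ^ (i.val + 1) / n * t ^ (n - (i.val + 1)) := by
          apply mul_lt_mul_of_pos_right h1 (by positivity)
      _ = t ^ n / n := by rw [div_mul_eq_mul_div, hpow]
  rw [Finset.sum_const, Finset.card_univ, Fintype.card_fin] at hlt
  have h2 : n • (t ^ n / (n : ℝ)) = t ^ n := by
    rw [nsmul_eq_mul]
    field_simp
  rw [h2] at hlt
  linarith

lemma key_bound {n : ℕ} (hn : 1 ≤ n) {t : ℝ} (ht : 0 ≤ t) {c : Fin n → ℝ}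
    (hc : ∀ i, 0 ≤ c i)
    (h : t ^ n ≤ ∑ i, c i * t ^ (n - (i.val + 1))) :
    t ^ 2 ≤ (n : ℝ) ^ 2 * ∑ i : Fin n, (c i) ^ ((2 : ℝ) / (i.val + 1)) := by
  have hsum_nonneg : 0 ≤ ∑ i : Fin n, (c i) ^ ((2 : ℝ) / (i.val + 1)) :=
    Finset.sum_nonneg fun i _ => Real.rpow_nonneg (hc i) _
  rcases ht.eq_or_lt with rfl | htpos
  · have h0 : (0 : ℝ) ^ 2 = 0 := by norm_num
    rw [h0]
    exact mul_nonneg (by positivity) hsum_nonneg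
  obtain ⟨i, hi⟩ := exists_pow_le hn htpos h
  have hi1 : (0 : ℝ) < (i.val + 1 : ℝ) := by positivity
  set p : ℝ := (2 : ℝ) / (i.val + 1) with hp
  have hppos : 0 < p := by positivity
  have key : t ^ 2 = (t ^ (i.val + 1)) ^ p := by
    rw [← Real.rpow_natCast t (i.val + 1), ← Real.rpow_mul ht, hp]
    have h5 : ((i.val + 1 : ℕ) : ℝ) * ((2 : ℝ) / (i.val + 1)) = 2 := by
      push_cast; field_simp
    rw [h5]
    norm_num [Real.rpow_two]
  have h2 : (t ^ (i.val + 1)) ^ p ≤ ((n : ℝ) * c i) ^ p :=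
    Real.rpow_le_rpow (by positivity) hi hppos.le
  have h3 : ((n : ℝ) * c i) ^ p = (n : ℝ) ^ p * (c i) ^ p :=
    Real.mul_rpow (by positivity) (hc i)
  have h4 : (n : ℝ) ^ p ≤ (n : ℝ) ^ 2 := by
    rw [← Real.rpow_two]
    apply Real.rpow_le_rpow_of_exponent_le (by exact_mod_cast hn)
    rw [hp, div_le_iff₀ hi1]
    nlinarith [i.val.cast_nonneg (α := ℝ)]
  have h5 : (c i) ^ p ≤ ∑ j : Fin n, (c j) ^ ((2 : ℝ) / (j.val + 1)) :=
    Finset.single_le_sum (f := fun j : Fin n => (c j) ^ ((2 : ℝ) / (j.val + 1)))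
      (fun j _ => Real.rpow_nonneg (hc j) _) (Finset.mem_univ i)
  calc t ^ 2 = (t ^ (i.val + 1)) ^ p := key
    _ ≤ ((n : ℝ) * c i) ^ p := h2
    _ = (n : ℝ) ^ p * (c i) ^ p := h3
    _ ≤ (n : ℝ) ^ 2 * ∑ j : Fin n, (c j) ^ ((2 : ℝ) / (j.val + 1)) :=
        mul_le_mul h4 h5 (Real.rpow_nonneg (hc i) _) (by positivity)

lemma exists_cont_ball {ψ : ℂ × ℂ → ℂ} (h : AnalyticAt ℂ ψ 0) :
    ∃ r > 0, ContinuousOn ψ (ball (0 : ℂ × ℂ) r) := by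
  obtain ⟨ε, hε, h2⟩ := Metric.eventually_nhds_iff.1 h.eventually_analyticAt
  exact ⟨ε, hε, fun x hx => ((h2 (mem_ball.1 hx)).continuousAt).continuousWithinAt⟩

lemma memMI_shrink {u : ℂ × ℂ → EReal} {ψ : ℂ × ℂ → ℂ} (hψ : MemMultIdeal u ψ)
    {Ω : Set (ℂ × ℂ)} (hΩ : IsOpen Ω) (h0 : (0 : ℂ × ℂ) ∈ Ω) :
    ∃ r > 0, ball (0 : ℂ × ℂ) r ⊆ Ω ∧ ContinuousOn ψ (ball 0 r) ∧
      ∫⁻ x in ball (0 : ℂ × ℂ) r,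
        ENNReal.ofReal (‖ψ x‖ ^ 2) * expE (((-2 : ℝ) : EReal) * u x) < ⊤ := by
  obtain ⟨V, hV, hVfin⟩ := hψ.2
  obtain ⟨r₁, hr₁, hcont⟩ := exists_cont_ball hψ.1
  obtain ⟨r₂, hr₂, hsub⟩ := Metric.mem_nhds_iff.1 (inter_mem hV (hΩ.mem_nhds h0))
  refine ⟨min r₁ r₂, lt_min hr₁ hr₂, ?_, ?_, ?_⟩
  · exact fun x hx => (hsub (ball_subset_ball (min_le_right _ _) hx)).2
  · exact hcont.mono (ball_subset_ball (min_le_left _ _))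
  · refine lt_of_le_of_lt ?_ hVfin
    apply lintegral_mono_set
    exact fun x hx => (hsub (ball_subset_ball (min_le_right _ _) hx)).1

lemma prod_lintegral_finite {u : ℂ × ℂ → EReal} {Ω : Set (ℂ × ℂ)} (hΩ : IsOpen Ω)
    (h0 : (0 : ℂ × ℂ) ∈ Ω) {w' : ℂ × ℂ → ENNReal} (hwmeas : Measurable w')
    (hw : ∀ x ∈ Ω, w' x = expE (((-2 : ℝ) : EReal) * u x))
    {m : ℕ} (hm : 1 ≤ m) {b : Fin m → ℂ × ℂ → ℂ} (hb : ∀ l, MemMultIdeal u (b l)) :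
    ∃ r > 0, ball (0 : ℂ × ℂ) r ⊆ Ω ∧ (∀ l, ContinuousOn (b l) (ball 0 r)) ∧
      ∫⁻ x in ball (0 : ℂ × ℂ) r,
        (∏ l, ENNReal.ofReal (‖b l x‖)) ^ ((2 : ℝ) / m) * w' x < ⊤ := by
  have hmR : (0 : ℝ) < m := by exact_mod_cast hm
  choose rs hrs hsubΩ hcont hfin using fun l => memMI_shrink (hb l) hΩ h0
  have hne : Nonempty (Fin m) := ⟨⟨0, hm⟩⟩
  have hune : (Finset.univ : Finset (Fin m)).Nonempty := Finset.univ_nonempty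
  set r : ℝ := Finset.univ.inf' hune rs with hrdef
  have hr : 0 < r := (Finset.lt_inf'_iff hune).2 fun l _ => hrs l
  have hsubl : ∀ l, ball (0 : ℂ × ℂ) r ⊆ ball 0 (rs l) :=
    fun l => ball_subset_ball (Finset.inf'_le _ (Finset.mem_univ l))
  have hballΩ : ball (0 : ℂ × ℂ) r ⊆ Ω := (hsubl ⟨0, hm⟩).trans (hsubΩ _)
  refine ⟨r, hr, hballΩ, fun l => (hcont l).mono (hsubl l), ?_⟩
  set μ := volume.restrict (ball (0 : ℂ × ℂ) r) with hμ
  set B : Fin m → ℂ × ℂ → ENNReal := fun l x => ENNReal.ofReal (‖b l x‖) with hB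
  set f : Fin m → ℂ × ℂ → ENNReal := fun l x => B l x ^ (2 : ℝ) * w' x with hf
  have hBmeas : ∀ l, AEMeasurable (B l) μ := by
    intro l
    have h1 : AEMeasurable (b l) μ :=
      ((hcont l).mono (hsubl l)).aemeasurable measurableSet_ball
    have h2 : (fun x => ‖b l x‖) = fun x => ‖b l x‖ :=
      funext fun x => rfl
    have : AEMeasurable (fun x => ‖b l x‖) μ := by rw [h2]; exact h1.norm
    exact this.ennreal_ofReal
  have hfmeas : ∀ l ∈ Finset.univ, AEMeasurable (f l) μ :=
    fun l _ => ((hBmeas l).pow_const (2 : ℝ)).mul hwmeas.aemeasurable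
  have hpsum : ∑ _l : Fin m, (1 : ℝ) / m = 1 := by
    rw [Finset.sum_const, Finset.card_univ, Fintype.card_fin, nsmul_eq_mul]
    field_simp
  have holder := ENNReal.lintegral_prod_norm_pow_le Finset.univ hfmeas hpsum
    (fun l _ => by positivity)
  have hLHS : ∀ x, ∏ l, f l x ^ ((1 : ℝ) / m)
      = (∏ l, B l x) ^ ((2 : ℝ) / m) * w' x := by
    intro x
    have h1 : ∀ l, f l x ^ ((1 : ℝ) / m) = B l x ^ ((2 : ℝ) / m) * w' x ^ ((1 : ℝ) / m) := by
      intro l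
      rw [hf]
      rw [ENNReal.mul_rpow_of_nonneg _ _ (by positivity : (0:ℝ) ≤ 1 / m),
        ← ENNReal.rpow_mul]
      congr 2
      ring
    rw [Finset.prod_congr rfl (fun l _ => h1 l), Finset.prod_mul_distrib,
      ENNReal.prod_rpow_of_nonneg (by positivity : (0:ℝ) ≤ (2:ℝ) / m),
      Finset.prod_const, Finset.card_univ, Fintype.card_fin,
      ← ENNReal.rpow_natCast (w' x ^ ((1 : ℝ) / m)) m, ← ENNReal.rpow_mul,
      one_div, inv_mul_cancel₀ (ne_of_gt hmR), ENNReal.rpow_one]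
  have hRHS : ∏ l, (∫⁻ x, f l x ∂μ) ^ ((1 : ℝ) / m) < ⊤ := by
    apply ENNReal.prod_lt_top
    intro l _
    apply ENNReal.rpow_lt_top_of_nonneg (by positivity)
    have hfx : ∀ x, f l x = ENNReal.ofReal (‖b l x‖ ^ 2) * w' x := by
      intro x
      show B l x ^ (2:ℝ) * w' x = _
      congr 1
      rw [show (2 : ℝ) = ((2 : ℕ) : ℝ) by norm_num, ENNReal.rpow_natCast, hB,
        ← ENNReal.ofReal_pow (norm_nonneg _)]
    have hle : ∫⁻ x, f l x ∂μ
        ≤ ∫⁻ x in ball (0 : ℂ × ℂ) (rs l), ENNReal.ofReal (‖b l x‖ ^ 2) * w' x := by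
      rw [hμ]
      simp_rw [hfx]
      exact lintegral_mono_set (hsubl l)
    have heq : ∫⁻ x in ball (0 : ℂ × ℂ) (rs l), ENNReal.ofReal (‖b l x‖ ^ 2) * w' x
        = ∫⁻ x in ball (0 : ℂ × ℂ) (rs l),
            ENNReal.ofReal (‖b l x‖ ^ 2) * expE (((-2 : ℝ) : EReal) * u x) := by
      apply setLIntegral_congr_fun measurableSet_ball
      exact fun x hx => by rw [hw x (hsubΩ l hx)]
    exact ne_of_lt (lt_of_le_of_lt hle (heq ▸ hfin l))
  calc ∫⁻ x in ball (0 : ℂ × ℂ) r, (∏ l, B l x) ^ ((2 : ℝ) / m) * w' x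
      = ∫⁻ x, ∏ l, f l x ^ ((1 : ℝ) / m) ∂μ := by rw [hμ]; simp_rw [hLHS]
    _ ≤ ∏ l, (∫⁻ x, f l x ∂μ) ^ ((1 : ℝ) / m) := holder
    _ < ⊤ := hRHS

lemma powMI_finite {u : ℂ × ℂ → EReal} {Ω : Set (ℂ × ℂ)} (hΩ : IsOpen Ω)
    (h0 : (0 : ℂ × ℂ) ∈ Ω) {w' : ℂ × ℂ → ENNReal} (hwmeas : Measurable w')
    (hw : ∀ x ∈ Ω, w' x = expE (((-2 : ℝ) : EReal) * u x))
    {m : ℕ} (hm : 1 ≤ m) {a : ℂ × ℂ → ℂ} (ha : MemMultIdealPow u m a) :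
    ∃ r > 0, ball (0 : ℂ × ℂ) r ⊆ Ω ∧
      AEMeasurable (fun x => ENNReal.ofReal (‖a x‖) ^ ((2 : ℝ) / m) * w' x)
        (volume.restrict (ball (0 : ℂ × ℂ) r)) ∧
      ∫⁻ x in ball (0 : ℂ × ℂ) r,
        ENNReal.ofReal (‖a x‖) ^ ((2 : ℝ) / m) * w' x < ⊤ := by
  obtain ⟨k, b, hb, heq⟩ := ha
  have hmR : (0 : ℝ) < m := by exact_mod_cast hm
  have hppos : (0 : ℝ) < 2 / m := by positivity
  choose rs hrs hsubΩ hcont hfin using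
    fun j : Fin k => prod_lintegral_finite hΩ h0 hwmeas hw hm (hb j)
  have hiball : (⋂ j : Fin k, ball (0 : ℂ × ℂ) (rs j)) ∈ 𝓝 (0 : ℂ × ℂ) :=
    Filter.iInter_mem.2 fun j => ball_mem_nhds _ (hrs j)
  obtain ⟨r, hr, hsub⟩ :=
    Metric.mem_nhds_iff.1 (inter_mem (inter_mem heq (hΩ.mem_nhds h0)) hiball)
  have hballΩ : ball (0 : ℂ × ℂ) r ⊆ Ω := fun x hx => (hsub hx).1.2
  have heqball : ∀ x ∈ ball (0 : ℂ × ℂ) r, a x = ∑ j, ∏ l, b j l x :=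
    fun x hx => (hsub hx).1.1
  have hsubj : ∀ j, ball (0 : ℂ × ℂ) r ⊆ ball 0 (rs j) :=
    fun j x hx => mem_iInter.1 (hsub hx).2 j
  set μ := volume.restrict (ball (0 : ℂ × ℂ) r) with hμ
  set P : Fin k → ℂ × ℂ → ENNReal :=
    fun j x => (∏ l, ENNReal.ofReal (‖b j l x‖)) ^ ((2 : ℝ) / m) * w' x with hP
  have hbmeas : ∀ j l, AEMeasurable (fun x => ENNReal.ofReal (‖b j l x‖)) μ := by
    intro j l
    have hc : AEMeasurable (b j l) μ :=
      ((hcont j l).mono (hsubj j)).aemeasurable measurableSet_ball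
    rw [show (fun x => ENNReal.ofReal (‖b j l x‖))
        = fun x => ENNReal.ofReal ‖b j l x‖ from
      funext fun x => rfl]
    exact hc.norm.ennreal_ofReal
  have hPmeas : ∀ j, AEMeasurable (P j) μ := fun j =>
    ((Finset.aemeasurable_fun_prod _ (fun l _ => hbmeas j l)).pow_const _).mul hwmeas.aemeasurable
  have hgmeas : AEMeasurable
      (fun x => ENNReal.ofReal (‖∑ j, ∏ l, b j l x‖) ^ ((2 : ℝ) / m) * w' x) μ := by
    have h1 : AEMeasurable (fun x => ∑ j, ∏ l, b j l x) μ :=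
      Finset.aemeasurable_fun_sum _ fun j _ => Finset.aemeasurable_fun_prod _ fun l _ =>
        ((hcont j l).mono (hsubj j)).aemeasurable measurableSet_ball
    have h2 : AEMeasurable (fun x => ENNReal.ofReal (‖∑ j, ∏ l, b j l x‖)) μ := by
      rw [show (fun x => ENNReal.ofReal (‖∑ j, ∏ l, b j l x‖))
          = fun x => ENNReal.ofReal ‖∑ j, ∏ l, b j l x‖ from
        funext fun x => rfl]
      exact h1.norm.ennreal_ofReal
    exact (h2.pow_const _).mul hwmeas.aemeasurable
  have hameas : AEMeasurable
      (fun x => ENNReal.ofReal (‖a x‖) ^ ((2 : ℝ) / m) * w' x) μ := by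
    refine hgmeas.congr ?_
    filter_upwards [ae_restrict_mem measurableSet_ball] with x hx
    rw [heqball x hx]
  have hpt : ∀ x ∈ ball (0 : ℂ × ℂ) r,
      ENNReal.ofReal (‖a x‖) ^ ((2 : ℝ) / m) * w' x
        ≤ (k : ENNReal) ^ ((2 : ℝ) / m) * ∑ j, P j x := by
    intro x hx
    have h1 : ‖a x‖ ≤ ∑ j, ∏ l, ‖b j l x‖ := by
      rw [heqball x hx]
      refine le_trans (norm_sum_le _ _) ?_
      apply Finset.sum_le_sum
      intro j _
      rw [norm_prod]
    have h2 : ENNReal.ofReal (‖a x‖)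
        ≤ ∑ j, ∏ l, ENNReal.ofReal (‖b j l x‖) := by
      refine le_trans (ENNReal.ofReal_le_ofReal h1) ?_
      rw [ENNReal.ofReal_sum_of_nonneg
        (fun j _ => Finset.prod_nonneg fun l _ => norm_nonneg _)]
      apply Finset.sum_le_sum
      intro j _
      rw [ENNReal.ofReal_prod_of_nonneg (fun l _ => norm_nonneg _)]
    calc ENNReal.ofReal (‖a x‖) ^ ((2 : ℝ) / m) * w' x
        ≤ (∑ j, ∏ l, ENNReal.ofReal (‖b j l x‖)) ^ ((2 : ℝ) / m) * w' x :=
          mul_le_mul_left (ENNReal.rpow_le_rpow h2 hppos.le) _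
      _ ≤ ((k : ENNReal) ^ ((2 : ℝ) / m)
            * ∑ j, (∏ l, ENNReal.ofReal (‖b j l x‖)) ^ ((2 : ℝ) / m)) * w' x := by
          apply mul_le_mul_left
          simpa using sum_rpow_le_card_rpow_mul Finset.univ
            (fun j => ∏ l, ENNReal.ofReal (‖b j l x‖)) hppos
      _ = (k : ENNReal) ^ ((2 : ℝ) / m) * ∑ j, P j x := by
          rw [mul_assoc, Finset.sum_mul]
  have hle : ∫⁻ x in ball (0 : ℂ × ℂ) r,
      ENNReal.ofReal (‖a x‖) ^ ((2 : ℝ) / m) * w' x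
        ≤ (k : ENNReal) ^ ((2 : ℝ) / m) * ∑ j, ∫⁻ x, P j x ∂μ := by
    refine le_trans (setLIntegral_mono' measurableSet_ball hpt) ?_
    rw [← hμ, lintegral_const_mul' _ _
      (ne_of_lt (ENNReal.rpow_lt_top_of_nonneg hppos.le (ENNReal.natCast_ne_top k))),
      lintegral_finset_sum' _ (fun j _ => hPmeas j)]
  refine ⟨r, hr, hballΩ, hameas, lt_of_le_of_lt hle ?_⟩
  apply ENNReal.mul_lt_top (ENNReal.rpow_lt_top_of_nonneg hppos.le (ENNReal.natCast_ne_top k))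
  rw [ENNReal.sum_lt_top]
  intro j _
  exact lt_of_le_of_lt (lintegral_mono_set (hsubj j)) (hfin j)

/-- **The multiplier ideal of a psh function is an integrally closed ideal** of the
ring `O₀` of holomorphic germs at `0 ∈ ℂ²`: it contains `0`, is closed under
addition and under multiplication by holomorphic germs, and whenever a germ `ψ`
satisfies an equation of integral dependence
`ψⁿ + a₁ ψ^{n−1} + ⋯ + aₙ = 0` near `0` with `n ≥ 1` and `aᵢ ∈ J(u)ⁱ`,
then `ψ ∈ J(u)`. -/
theorem multiplier_ideal_integrally_closed (u : ℂ × ℂ → EReal) (Ω : Set (ℂ × ℂ))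
    (hΩ : IsOpen Ω) (h0 : (0 : ℂ × ℂ) ∈ Ω) (hpsh : IsPshOn Ω u) :
    MemMultIdeal u (fun _ => 0) ∧
    (∀ ψ₁ ψ₂ : ℂ × ℂ → ℂ, MemMultIdeal u ψ₁ → MemMultIdeal u ψ₂ →
      MemMultIdeal u (fun x => ψ₁ x + ψ₂ x)) ∧
    (∀ h ψ : ℂ × ℂ → ℂ, AnalyticAt ℂ h 0 → MemMultIdeal u ψ →
      MemMultIdeal u (fun x => h x * ψ x)) ∧
    (∀ (n : ℕ), 1 ≤ n → ∀ (ψ : ℂ × ℂ → ℂ) (a : Fin n → ℂ × ℂ → ℂ),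
      AnalyticAt ℂ ψ 0 →
      (∀ i : Fin n, MemMultIdealPow u (i.val + 1) (a i)) →
      (∀ᶠ x in 𝓝 (0 : ℂ × ℂ),
        ψ x ^ n + ∑ i : Fin n, a i x * ψ x ^ (n - (i.val + 1)) = 0) →
      MemMultIdeal u ψ) := by
  obtain ⟨w', hwmeas, hw⟩ := exists_w' hΩ hpsh.usc
  refine ⟨?_, ?_, ?_, ?_⟩
  · -- zero
    refine ⟨analyticAt_const, Set.univ, univ_mem, ?_⟩
    have hz : (fun q : ℂ × ℂ => ENNReal.ofReal (‖(fun _ => (0 : ℂ)) q‖ ^ 2) *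
        expE (((-2 : ℝ) : EReal) * u q)) = fun _ => 0 := by
      funext q; simp
    rw [hz, lintegral_zero]
    exact ENNReal.zero_lt_top
  · -- add
    intro ψ₁ ψ₂ h1 h2
    obtain ⟨r₁, hr₁, hΩ₁, hc₁, hf₁⟩ := memMI_shrink h1 hΩ h0
    obtain ⟨r₂, hr₂, hΩ₂, hc₂, hf₂⟩ := memMI_shrink h2 hΩ h0
    refine ⟨h1.1.add h2.1, ball 0 (min r₁ r₂), ball_mem_nhds _ (lt_min hr₁ hr₂), ?_⟩
    set E : ℂ × ℂ → ENNReal := fun x => expE (((-2 : ℝ) : EReal) * u x) with hE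
    set F₁ : ℂ × ℂ → ENNReal := fun x => ENNReal.ofReal (‖ψ₁ x‖ ^ 2) * E x with hF₁
    set F₂ : ℂ × ℂ → ENNReal := fun x => ENNReal.ofReal (‖ψ₂ x‖ ^ 2) * E x with hF₂
    have hpt : ∀ x, ENNReal.ofReal (‖ψ₁ x + ψ₂ x‖ ^ 2) * E x
        ≤ 2 * (F₁ x + F₂ x) := by
      intro x
      have habs : ‖ψ₁ x + ψ₂ x‖ ^ 2
          ≤ 2 * (‖ψ₁ x‖ ^ 2 + ‖ψ₂ x‖ ^ 2) := by
        have h3 := norm_add_le (ψ₁ x) (ψ₂ x)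
        have h4 := norm_nonneg (ψ₁ x + ψ₂ x)
        nlinarith [norm_nonneg (ψ₁ x), norm_nonneg (ψ₂ x),
          sq_nonneg (‖ψ₁ x‖ - ‖ψ₂ x‖),
          sq_nonneg (‖ψ₁ x‖ + ‖ψ₂ x‖)]
      calc ENNReal.ofReal (‖ψ₁ x + ψ₂ x‖ ^ 2) * E x
          ≤ ENNReal.ofReal (2 * (‖ψ₁ x‖ ^ 2 + ‖ψ₂ x‖ ^ 2)) * E x :=
            mul_le_mul_left (ENNReal.ofReal_le_ofReal habs) _
        _ = 2 * (F₁ x + F₂ x) := by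
            rw [ENNReal.ofReal_mul (by norm_num : (0:ℝ) ≤ 2),
              ENNReal.ofReal_add (by positivity) (by positivity), hF₁, hF₂,
              ENNReal.ofReal_ofNat]
            ring
    have hEmeas : AEMeasurable E (volume.restrict (ball (0 : ℂ × ℂ) (min r₁ r₂))) := by
      refine hwmeas.aemeasurable.congr ?_
      filter_upwards [ae_restrict_mem measurableSet_ball] with x hx
      exact hw x (hΩ₁ (ball_subset_ball (min_le_left _ _) hx))
    have hF₁meas : AEMeasurable F₁ (volume.restrict (ball (0 : ℂ × ℂ) (min r₁ r₂))) := by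
      have hm : AEMeasurable ψ₁ (volume.restrict (ball (0 : ℂ × ℂ) (min r₁ r₂))) :=
        (hc₁.mono (ball_subset_ball (min_le_left _ _))).aemeasurable measurableSet_ball
      have : AEMeasurable (fun x => ENNReal.ofReal (‖ψ₁ x‖ ^ 2))
          (volume.restrict (ball (0 : ℂ × ℂ) (min r₁ r₂))) := by
        rw [show (fun x => ENNReal.ofReal (‖ψ₁ x‖ ^ 2))
            = fun x => ENNReal.ofReal (‖ψ₁ x‖ ^ 2) from
          funext fun x => rfl]
        exact (hm.norm.pow_const 2).ennreal_ofReal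
      exact this.mul hEmeas
    calc ∫⁻ x in ball (0 : ℂ × ℂ) (min r₁ r₂),
          ENNReal.ofReal (‖ψ₁ x + ψ₂ x‖ ^ 2) * E x
        ≤ ∫⁻ x in ball (0 : ℂ × ℂ) (min r₁ r₂), 2 * (F₁ x + F₂ x) :=
          setLIntegral_mono' measurableSet_ball fun x _ => hpt x
      _ = 2 * ((∫⁻ x in ball (0 : ℂ × ℂ) (min r₁ r₂), F₁ x)
            + ∫⁻ x in ball (0 : ℂ × ℂ) (min r₁ r₂), F₂ x) := by
          rw [lintegral_const_mul' _ _ (by norm_num : (2 : ENNReal) ≠ ⊤),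
            lintegral_add_left' hF₁meas]
      _ < ⊤ := by
          have e₁ := lt_of_le_of_lt
            (lintegral_mono_set (ball_subset_ball (min_le_left r₁ r₂)) :
              (∫⁻ x in ball (0 : ℂ × ℂ) (min r₁ r₂), F₁ x) ≤ _) hf₁
          have e₂ := lt_of_le_of_lt
            (lintegral_mono_set (ball_subset_ball (min_le_right r₁ r₂)) :
              (∫⁻ x in ball (0 : ℂ × ℂ) (min r₁ r₂), F₂ x) ≤ _) hf₂
          exact ENNReal.mul_lt_top (by norm_num) (ENNReal.add_lt_top.2 ⟨e₁, e₂⟩)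
  · -- mul
    intro h ψ hh hψ
    obtain ⟨rψ, hrψ, hΩψ, hcψ, hfψ⟩ := memMI_shrink hψ hΩ h0
    have hev : ∀ᶠ x in 𝓝 (0 : ℂ × ℂ), ‖h x‖ < ‖h 0‖ + 1 :=
      (hh.continuousAt.norm).eventually_lt_const (by linarith [norm_nonneg (h 0)])
    obtain ⟨rh, hrh, hbd⟩ := Metric.eventually_nhds_iff.1 hev
    refine ⟨hh.mul hψ.1, ball 0 (min rh rψ), ball_mem_nhds _ (lt_min hrh hrψ), ?_⟩
    set E : ℂ × ℂ → ENNReal := fun x => expE (((-2 : ℝ) : EReal) * u x) with hE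
    set C : ℝ := ‖h 0‖ + 1 with hC
    have hpt : ∀ x ∈ ball (0 : ℂ × ℂ) (min rh rψ),
        ENNReal.ofReal (‖h x * ψ x‖ ^ 2) * E x
          ≤ ENNReal.ofReal (C ^ 2) * (ENNReal.ofReal (‖ψ x‖ ^ 2) * E x) := by
      intro x hx
      have hxh : ‖h x‖ < C := hbd (mem_ball.1 (ball_subset_ball (min_le_left _ _) hx))
      have habs : ‖h x * ψ x‖ ^ 2 ≤ C ^ 2 * ‖ψ x‖ ^ 2 := by
        rw [norm_mul, mul_pow]
        have h5 : ‖h x‖ = ‖h x‖ := rfl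
        have h6 : ‖h x‖ ^ 2 ≤ C ^ 2 := by
          rw [h5]
          nlinarith [norm_nonneg (h x)]
        exact mul_le_mul_of_nonneg_right h6 (sq_nonneg _)
      calc ENNReal.ofReal (‖h x * ψ x‖ ^ 2) * E x
          ≤ ENNReal.ofReal (C ^ 2 * ‖ψ x‖ ^ 2) * E x :=
            mul_le_mul_left (ENNReal.ofReal_le_ofReal habs) _
        _ = ENNReal.ofReal (C ^ 2) * (ENNReal.ofReal (‖ψ x‖ ^ 2) * E x) := by
            rw [ENNReal.ofReal_mul (by positivity), mul_assoc]
    calc ∫⁻ x in ball (0 : ℂ × ℂ) (min rh rψ),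
          ENNReal.ofReal (‖h x * ψ x‖ ^ 2) * E x
        ≤ ∫⁻ x in ball (0 : ℂ × ℂ) (min rh rψ),
            ENNReal.ofReal (C ^ 2) * (ENNReal.ofReal (‖ψ x‖ ^ 2) * E x) :=
          setLIntegral_mono' measurableSet_ball hpt
      _ = ENNReal.ofReal (C ^ 2)
            * ∫⁻ x in ball (0 : ℂ × ℂ) (min rh rψ),
                ENNReal.ofReal (‖ψ x‖ ^ 2) * E x :=
          lintegral_const_mul' _ _ ENNReal.ofReal_ne_top
      _ < ⊤ := ENNReal.mul_lt_top ENNReal.ofReal_lt_top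
          (lt_of_le_of_lt (lintegral_mono_set (ball_subset_ball (min_le_right _ _))) hfψ)
  · -- integral closure
    intro n hn ψ a hψa hai heqev
    have hnn : (0 : ℝ) < n := by exact_mod_cast hn
    -- radii for each a i
    choose rs hrs hsubΩ hams hfin using
      fun i : Fin n => powMI_finite hΩ h0 hwmeas hw (Nat.le_add_left 1 i.val) (hai i)
    have hcast : ∀ i : Fin n, ((i.val + 1 : ℕ) : ℝ) = (i.val : ℝ) + 1 := fun i => by
      push_cast; ring
    simp_rw [hcast] at hams hfin
    have hiball : (⋂ i : Fin n, ball (0 : ℂ × ℂ) (rs i)) ∈ 𝓝 (0 : ℂ × ℂ) :=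
      Filter.iInter_mem.2 fun i => ball_mem_nhds _ (hrs i)
    -- analyticity: continuity of ψ near 0
    obtain ⟨rc, hrc, hcψ⟩ := exists_cont_ball hψa
    obtain ⟨r, hr, hsub⟩ := Metric.mem_nhds_iff.1
      (inter_mem (inter_mem (inter_mem heqev (hΩ.mem_nhds h0)) hiball)
        (ball_mem_nhds _ hrc))
    have hballΩ : ball (0 : ℂ × ℂ) r ⊆ Ω := fun x hx => (hsub hx).1.1.2
    have heqball : ∀ x ∈ ball (0 : ℂ × ℂ) r,
        ψ x ^ n + ∑ i : Fin n, a i x * ψ x ^ (n - (i.val + 1)) = 0 :=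
      fun x hx => (hsub hx).1.1.1
    have hsubi : ∀ i, ball (0 : ℂ × ℂ) r ⊆ ball 0 (rs i) :=
      fun i x hx => mem_iInter.1 (hsub hx).1.2 i
    have hsubc : ball (0 : ℂ × ℂ) r ⊆ ball 0 rc := fun x hx => (hsub hx).2
    refine ⟨hψa, ball 0 r, ball_mem_nhds _ hr, ?_⟩
    set μ := volume.restrict (ball (0 : ℂ × ℂ) r) with hμ
    set G : Fin n → ℂ × ℂ → ENNReal :=
      fun i x => ENNReal.ofReal (‖a i x‖) ^ ((2 : ℝ) / (i.val + 1)) * w' x with hG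
    -- pointwise bound
    have hpt : ∀ x ∈ ball (0 : ℂ × ℂ) r,
        ENNReal.ofReal (‖ψ x‖ ^ 2) * w' x
          ≤ (n : ENNReal) ^ 2 * ∑ i : Fin n, G i x := by
      intro x hx
      set t : ℝ := ‖ψ x‖ with ht
      have habs : t ^ n ≤ ∑ i : Fin n, ‖a i x‖ * t ^ (n - (i.val + 1)) := by
        have h1 : ψ x ^ n = -∑ i : Fin n, a i x * ψ x ^ (n - (i.val + 1)) :=
          eq_neg_of_add_eq_zero_left (heqball x hx)
        calc t ^ n = ‖ψ x ^ n‖ := by rw [ht, norm_pow]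
          _ = ‖∑ i : Fin n, a i x * ψ x ^ (n - (i.val + 1))‖ := by
              rw [h1, norm_neg]
          _ ≤ ∑ i : Fin n, ‖a i x * ψ x ^ (n - (i.val + 1))‖ :=
              norm_sum_le _ _
          _ = ∑ i : Fin n, ‖a i x‖ * t ^ (n - (i.val + 1)) := by
              apply Finset.sum_congr rfl
              intro i _
              rw [norm_mul, norm_pow, ht]
      have hkey := key_bound hn (norm_nonneg (ψ x))
        (fun i => norm_nonneg (a i x)) habs
      have h2 : ENNReal.ofReal (t ^ 2)
          ≤ (n : ENNReal) ^ 2 * ∑ i : Fin n,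
              ENNReal.ofReal (‖a i x‖) ^ ((2 : ℝ) / (i.val + 1)) := by
        refine le_trans (ENNReal.ofReal_le_ofReal hkey) ?_
        rw [ENNReal.ofReal_mul (by positivity),
          ENNReal.ofReal_sum_of_nonneg
            (fun i _ => Real.rpow_nonneg (norm_nonneg _) _),
          ENNReal.ofReal_pow (by positivity), ENNReal.ofReal_natCast]
        apply mul_le_mul_right
        apply Finset.sum_le_sum
        intro i _
        rw [ENNReal.ofReal_rpow_of_nonneg (norm_nonneg _) (by positivity)]
      calc ENNReal.ofReal (‖ψ x‖ ^ 2) * w' x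
          ≤ ((n : ENNReal) ^ 2 * ∑ i : Fin n,
              ENNReal.ofReal (‖a i x‖) ^ ((2 : ℝ) / (i.val + 1))) * w' x :=
            mul_le_mul_left h2 _
        _ = (n : ENNReal) ^ 2 * ∑ i : Fin n, G i x := by
            rw [mul_assoc, Finset.sum_mul]
    -- the integral
    have hGmeas : ∀ i : Fin n, AEMeasurable (G i) μ := by
      intro i
      have := (hams i).mono_measure (Measure.restrict_mono (hsubi i) le_rfl)
      exact this
    calc ∫⁻ x in ball (0 : ℂ × ℂ) r,
          ENNReal.ofReal (‖ψ x‖ ^ 2) * expE (((-2 : ℝ) : EReal) * u x)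
        = ∫⁻ x in ball (0 : ℂ × ℂ) r, ENNReal.ofReal (‖ψ x‖ ^ 2) * w' x := by
          apply setLIntegral_congr_fun measurableSet_ball
          exact fun x hx => by rw [hw x (hballΩ hx)]
      _ ≤ ∫⁻ x in ball (0 : ℂ × ℂ) r, (n : ENNReal) ^ 2 * ∑ i : Fin n, G i x :=
          setLIntegral_mono' measurableSet_ball hpt
      _ = (n : ENNReal) ^ 2 * ∑ i : Fin n, ∫⁻ x, G i x ∂μ := by
          rw [← hμ, lintegral_const_mul' _ _
              (ENNReal.pow_ne_top (ENNReal.natCast_ne_top n)),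
            lintegral_finset_sum' _ (fun i _ => hGmeas i)]
      _ < ⊤ := by
          apply ENNReal.mul_lt_top
          · exact lt_top_iff_ne_top.2 (ENNReal.pow_ne_top (ENNReal.natCast_ne_top n))
          · rw [ENNReal.sum_lt_top]
            intro i _
            exact lt_of_le_of_lt (lintegral_mono_set (hsubi i)) (hfin i)

end
end
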